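/- Let G be a finite group and (H,K) a Shoda pair of G with H normal in G. Then (H,K) is a strong Shoda pair of G; that is: (SS1) H is normal in N_G(K); (SS2) H/K is cyclic and a maximal abelian subgroup of N_G(K)/K; and (SS3) for every g ∈ G with g ∉ N_G(K), ε(H,K)·(g⁻¹ ε(H,K) g) = 0 in ℚ[G]. -/

import Mathlib

open scoped Classical

namespace Paper

variable {G : Type*} [Group G] [Fintype G]

noncomputable instance : Fintype (Subgroup G) :=
  Fintype.ofInjective (fun H : Subgroup G => (H : Set G)) SetLike.coe_injective

/-- `M̂ = (1/|M|) ∑_{m ∈ M} m` in the rational group algebra `ℚ[G]`. -/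
noncomputable def hat (M : Subgroup G) : MonoidAlgebra ℚ G :=
  (Nat.card M : ℚ)⁻¹ • ∑ m : M, MonoidAlgebra.of ℚ G (m : G)

/-- `L` is a normal subgroup of `H` properly containing `K`. -/
def NormalOver (H K L : Subgroup G) : Prop :=
  L ≤ H ∧ K < L ∧ ∀ h ∈ H, ∀ g ∈ L, h⁻¹ * g * h ∈ L

/-- `L` is minimal among the normal subgroups of `H` properly containing `K`. -/
def MinimalOver (H K L : Subgroup G) : Prop :=
  NormalOver H K L ∧ ∀ L' : Subgroup G, NormalOver H K L' → L' ≤ L → L' = L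

/-- `ε(H,K) = K̂` if `H = K`, and otherwise `∏_L (K̂ - L̂)`, the product running over
the normal subgroups `L` of `H` minimal with respect to properly containing `K`
(all such factors commute pairwise, so the product is order-independent). -/
noncomputable def eps (H K : Subgroup G) : MonoidAlgebra ℚ G :=
  if H = K then hat K
  else (({L : Subgroup G | MinimalOver H K L}.toFinset).toList.map
    fun L => hat K - hat L).prod

/-- The subgroup `[H,g] = ⟨g⁻¹h⁻¹gh : h ∈ H⟩`. -/
def commSub (H : Subgroup G) (g : G) : Subgroup G :=
  Subgroup.closure {c : G | ∃ h ∈ H, c = g⁻¹ * h⁻¹ * g * h}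

/-- The quotient `H/K` is cyclic (elementwise formulation: some `h ∈ H` is such that
every `g ∈ H` lies in a coset `h^m K`). -/
def CyclicQuot (H K : Subgroup G) : Prop :=
  ∃ h ∈ H, ∀ g ∈ H, ∃ m : ℤ, (h ^ m)⁻¹ * g ∈ K

/-- `K` is normal in `H` (elementwise formulation). -/
def NormalIn (H K : Subgroup G) : Prop :=
  ∀ h ∈ H, ∀ g ∈ K, h⁻¹ * g * h ∈ K

/-- `(H,K)` is a Shoda pair of `G`. -/
def IsShodaPair (H K : Subgroup G) : Prop :=
  K ≤ H ∧ NormalIn H K ∧ CyclicQuot H K ∧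
    ∀ g : G, commSub H g ⊓ H ≤ K → g ∈ H

/-- `(H,K)` is a strong Shoda pair of `G`: conditions (SS1), (SS2), (SS3).
Maximal abelianness of `H/K` in `N_G(K)/K` is phrased via the Galois correspondence
between subgroups of `N_G(K)/K` and subgroups of `G` lying between `K` and `N_G(K)`. -/
def IsStrongShodaPair (H K : Subgroup G) : Prop :=
  -- (SS1): `H` is a normal subgroup of `N_G(K)`
  (H ≤ Subgroup.normalizer (K : Set G) ∧ ∀ g ∈ Subgroup.normalizer (K : Set G), ∀ h ∈ H, g⁻¹ * h * g ∈ H) ∧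
  -- (SS2): `H/K` is cyclic and a maximal abelian subgroup of `N_G(K)/K`
  (CyclicQuot H K ∧
    (∀ h₁ ∈ H, ∀ h₂ ∈ H, h₁⁻¹ * h₂⁻¹ * h₁ * h₂ ∈ K) ∧
    ∀ C : Subgroup G, K ≤ C → C ≤ Subgroup.normalizer (K : Set G) →
      (∀ c₁ ∈ C, ∀ c₂ ∈ C, c₁⁻¹ * c₂⁻¹ * c₁ * c₂ ∈ K) → H ≤ C → C = H) ∧
  -- (SS3): `ε(H,K)·(g⁻¹ ε(H,K) g) = 0` for `g ∉ N_G(K)`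
  (∀ g : G, g ∉ Subgroup.normalizer (K : Set G) →
    eps H K * (MonoidAlgebra.of ℚ G g⁻¹ * eps H K * MonoidAlgebra.of ℚ G g) = 0)

end Paper

namespace StrongShodaAux

open Paper

variable {G : Type*} [Group G] [Fintype G]

lemma of_mul_hat {B : Subgroup G} {a : G} (ha : a ∈ B) :
    MonoidAlgebra.of ℚ G a * hat B = hat B := by
  unfold Paper.hat
  rw [mul_smul_comm, Finset.mul_sum]
  congr 1
  refine Fintype.sum_equiv (Equiv.mulLeft (⟨a, ha⟩ : B)) _ _ (fun m => ?_)
  simp [map_mul]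

lemma hat_mul_of {B : Subgroup G} {a : G} (ha : a ∈ B) :
    hat B * MonoidAlgebra.of ℚ G a = hat B := by
  unfold Paper.hat
  rw [smul_mul_assoc, Finset.sum_mul]
  congr 1
  refine Fintype.sum_equiv (Equiv.mulRight (⟨a, ha⟩ : B)) _ _ (fun m => ?_)
  simp [map_mul]

lemma card_ne_zero (B : Subgroup G) : (Nat.card B : ℚ) ≠ 0 := by
  exact_mod_cast Nat.card_pos.ne'

lemma hat_mul_eq_self {B : Subgroup G} {x : MonoidAlgebra ℚ G}
    (h : ∀ m ∈ B, MonoidAlgebra.of ℚ G m * x = x) : hat B * x = x := by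
  conv_lhs => rw [show hat B = (Nat.card B : ℚ)⁻¹ • ∑ m : B, MonoidAlgebra.of ℚ G (m : G) from rfl,
    smul_mul_assoc, Finset.sum_mul]
  have hs : ∑ m : B, (MonoidAlgebra.of ℚ G (m : G) * x) = ∑ _m : B, x :=
    Finset.sum_congr rfl (fun m _ => h m m.2)
  rw [hs, Finset.sum_const, Finset.card_univ,
    ← Nat.card_eq_fintype_card, ← Nat.cast_smul_eq_nsmul ℚ, smul_smul,
    inv_mul_cancel₀ (card_ne_zero B), one_smul]

lemma mul_hat_eq_self {B : Subgroup G} {x : MonoidAlgebra ℚ G}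
    (h : ∀ m ∈ B, x * MonoidAlgebra.of ℚ G m = x) : x * hat B = x := by
  conv_lhs => rw [show hat B = (Nat.card B : ℚ)⁻¹ • ∑ m : B, MonoidAlgebra.of ℚ G (m : G) from rfl,
    mul_smul_comm, Finset.mul_sum]
  have hs : ∑ m : B, (x * MonoidAlgebra.of ℚ G (m : G)) = ∑ _m : B, x :=
    Finset.sum_congr rfl (fun m _ => h m m.2)
  rw [hs, Finset.sum_const, Finset.card_univ,
    ← Nat.card_eq_fintype_card, ← Nat.cast_smul_eq_nsmul ℚ, smul_smul,
    inv_mul_cancel₀ (card_ne_zero B), one_smul]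

lemma hat_mul_hat_of_le {A B : Subgroup G} (h : A ≤ B) :
    hat A * hat B = hat B :=
  hat_mul_eq_self (fun m hm => of_mul_hat (h hm))

lemma hat_mul_hat_of_le' {A B : Subgroup G} (h : A ≤ B) :
    hat B * hat A = hat B :=
  mul_hat_eq_self (fun m hm => hat_mul_of (h hm))

lemma of_comm_hat {K : Subgroup G} {a : G} (h1 : ∀ k ∈ K, a * k * a⁻¹ ∈ K)
    (h2 : ∀ k ∈ K, a⁻¹ * k * a ∈ K) :
    MonoidAlgebra.of ℚ G a * hat K = hat K * MonoidAlgebra.of ℚ G a := by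
  unfold Paper.hat
  rw [mul_smul_comm, smul_mul_assoc, Finset.mul_sum, Finset.sum_mul]
  congr 1
  refine Fintype.sum_equiv
    ⟨fun k => ⟨a * k * a⁻¹, h1 k k.2⟩, fun k => ⟨a⁻¹ * k * a, h2 k k.2⟩,
      fun k => by ext; simp [mul_assoc], fun k => by ext; simp [mul_assoc]⟩ _ _ (fun k => ?_)
  show MonoidAlgebra.of ℚ G a * MonoidAlgebra.of ℚ G (k : G)
      = MonoidAlgebra.of ℚ G (a * (k : G) * a⁻¹) * MonoidAlgebra.of ℚ G a
  rw [← map_mul, ← map_mul]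
  congr 1
  group

lemma conj_hat (K : Subgroup G) (a : G) :
    MonoidAlgebra.of ℚ G a * hat K * MonoidAlgebra.of ℚ G a⁻¹ =
      hat (K.map (MulAut.conj a).toMonoidHom) := by
  have hinj : Function.Injective ((MulAut.conj a).toMonoidHom : G →* G) :=
    (MulAut.conj a).injective
  unfold Paper.hat
  rw [mul_smul_comm, smul_mul_assoc, Finset.mul_sum, Finset.sum_mul]
  rw [Nat.card_congr (K.equivMapOfInjective _ hinj).toEquiv.symm]
  congr 1
  refine Fintype.sum_equiv (K.equivMapOfInjective _ hinj).toEquiv _ _ (fun k => ?_)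
  have hc : (((K.equivMapOfInjective _ hinj).toEquiv k : Subgroup.map _ K) : G)
      = a * (k : G) * a⁻¹ := rfl
  rw [hc, ← map_mul, ← map_mul]

lemma mem_sup_exists {H K B : Subgroup G} (hBH : B ≤ H) (hN : NormalIn H K) :
    ∀ m ∈ K ⊔ B, ∃ k ∈ K, ∃ b ∈ B, m = k * b := by
  intro m hm
  rw [Subgroup.sup_eq_closure] at hm
  induction hm using Subgroup.closure_induction with
  | mem x hx =>
    rcases hx with hx | hx
    · exact ⟨x, hx, 1, one_mem _, (mul_one x).symm⟩
    · exact ⟨1, one_mem _, x, hx, (one_mul x).symm⟩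
  | one => exact ⟨1, one_mem _, 1, one_mem _, (one_mul 1).symm⟩
  | mul x y hx hy ihx ihy =>
    obtain ⟨k1, hk1, b1, hb1, rfl⟩ := ihx
    obtain ⟨k2, hk2, b2, hb2, rfl⟩ := ihy
    have hc : b1 * k2 * b1⁻¹ ∈ K := by
      have := hN b1⁻¹ (inv_mem (hBH hb1)) k2 hk2
      simpa [mul_assoc] using this
    exact ⟨k1 * (b1 * k2 * b1⁻¹), mul_mem hk1 hc, b1 * b2, mul_mem hb1 hb2, by group⟩
  | inv x hx ihx =>
    obtain ⟨k, hk, b, hb, rfl⟩ := ihx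
    have hc : b⁻¹ * k⁻¹ * b ∈ K := hN b (hBH hb) k⁻¹ (inv_mem hk)
    exact ⟨b⁻¹ * k⁻¹ * b, hc, b⁻¹, inv_mem hb, by group⟩

lemma hat_mul_hat_sup {H K B : Subgroup G} (hKH : K ≤ H) (hBH : B ≤ H)
    (hN : NormalIn H K) : hat K * hat B = hat (K ⊔ B) := by
  have key : ∀ m ∈ K ⊔ B, MonoidAlgebra.of ℚ G m * (hat K * hat B) = hat K * hat B := by
    intro m hm
    obtain ⟨k, hk, b, hb, rfl⟩ := mem_sup_exists hBH hN m hm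
    have hcomm : MonoidAlgebra.of ℚ G b * hat K = hat K * MonoidAlgebra.of ℚ G b := by
      apply of_comm_hat
      · intro k' hk'; simpa [mul_assoc] using hN b⁻¹ (inv_mem (hBH hb)) k' hk'
      · intro k' hk'; exact hN b (hBH hb) k' hk'
    calc MonoidAlgebra.of ℚ G (k * b) * (hat K * hat B)
        = MonoidAlgebra.of ℚ G k * ((MonoidAlgebra.of ℚ G b * hat K) * hat B) := by
          rw [map_mul, mul_assoc, ← mul_assoc (MonoidAlgebra.of ℚ G b)]
      _ = MonoidAlgebra.of ℚ G k * (hat K * (MonoidAlgebra.of ℚ G b * hat B)) := by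
          rw [hcomm, mul_assoc (hat K)]
      _ = MonoidAlgebra.of ℚ G k * hat K * hat B := by
          rw [of_mul_hat hb, ← mul_assoc]
      _ = hat K * hat B := by rw [of_mul_hat hk]
  have h2 : hat (K ⊔ B) * (hat K * hat B) = hat K * hat B := hat_mul_eq_self key
  have h3 : hat (K ⊔ B) * (hat K * hat B) = hat (K ⊔ B) := by
    rw [← mul_assoc, hat_mul_hat_of_le' le_sup_left, hat_mul_hat_of_le' le_sup_right]
  rw [← h2, h3]

lemma hat_comm_of_normal {H L L' : Subgroup G} (hLH : L ≤ H) (hL'H : L' ≤ H)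
    (hNL : NormalIn H L) (hNL' : NormalIn H L') :
    hat L * hat L' = hat L' * hat L := by
  rw [hat_mul_hat_sup hLH hL'H hNL, hat_mul_hat_sup hL'H hLH hNL', sup_comm]

lemma factor_commute {H K L L' : Subgroup G}
    (hL : NormalOver H K L) (hL' : NormalOver H K L') :
    Commute (hat K - hat L) (hat K - hat L') := by
  have h1 : hat K * hat L' = hat L' := hat_mul_hat_of_le hL'.2.1.le
  have h1' : hat L' * hat K = hat L' := hat_mul_hat_of_le' hL'.2.1.le
  have h2 : hat K * hat L = hat L := hat_mul_hat_of_le hL.2.1.le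
  have h2' : hat L * hat K = hat L := hat_mul_hat_of_le' hL.2.1.le
  have h3 : hat L * hat L' = hat L' * hat L :=
    hat_comm_of_normal hL.1 hL'.1 hL.2.2 hL'.2.2
  show (hat K - hat L) * (hat K - hat L') = (hat K - hat L') * (hat K - hat L)
  rw [sub_mul, sub_mul, mul_sub, mul_sub, mul_sub, mul_sub, h1, h1', h2, h2', h3]
  abel

lemma exists_minimalOver {H K M : Subgroup G} (hM : NormalOver H K M) :
    ∃ L, MinimalOver H K L ∧ L ≤ M := by
  have hMs : M ∈ ({L | NormalOver H K L ∧ L ≤ M} : Set (Subgroup G)).toFinset := by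
    rw [Set.mem_toFinset]; exact ⟨hM, le_rfl⟩
  obtain ⟨L, hLs, hmin⟩ :=
    Finset.exists_minimal (s := ({L | NormalOver H K L ∧ L ≤ M} : Set (Subgroup G)).toFinset) ⟨M, hMs⟩
  simp only [Set.mem_toFinset] at hLs
  refine ⟨L, ⟨hLs.1, ?_⟩, hLs.2⟩
  intro L' hL' hle
  by_contra hne
  exact hne (le_antisymm hle (hmin (Set.mem_toFinset.mpr ⟨hL', hle.trans hLs.2⟩) hle))

lemma eps_eq {H K : Subgroup G} (hne : H ≠ K) :
    eps H K = (({L : Subgroup G | MinimalOver H K L}.toFinset).toList.map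
      fun L => hat K - hat L).prod := by
  rw [Paper.eps, if_neg hne]

lemma eps_list_pairwise (H K : Subgroup G) :
    (({L : Subgroup G | MinimalOver H K L}.toFinset).toList.map
      fun L => hat K - hat L).Pairwise Commute := by
  apply List.pairwise_of_forall_mem_list
  intro x hx y hy
  obtain ⟨L, hL, rfl⟩ := List.mem_map.mp hx
  obtain ⟨L', hL', rfl⟩ := List.mem_map.mp hy
  rw [Finset.mem_toList, Set.mem_toFinset] at hL hL'
  exact factor_commute hL.1 hL'.1

lemma eps_list_ne_nil {H K : Subgroup G} (hlt : K < H) :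
    (({L : Subgroup G | MinimalOver H K L}.toFinset).toList.map
      fun L => hat K - hat L) ≠ [] := by
  have hNO : NormalOver H K H :=
    ⟨le_rfl, hlt, fun h hh g hg => H.mul_mem (H.mul_mem (inv_mem hh) hg) hh⟩
  obtain ⟨L, hL, _⟩ := exists_minimalOver hNO
  have hmem : L ∈ ({L : Subgroup G | MinimalOver H K L}.toFinset).toList := by
    rw [Finset.mem_toList, Set.mem_toFinset]; exact hL
  exact List.ne_nil_of_mem (List.mem_map_of_mem hmem)

lemma eps_mul_hatK {H K : Subgroup G} (hKH : K ≤ H) (hne : H ≠ K) :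
    eps H K * hat K = eps H K := by
  rw [eps_eq hne]
  rcases List.eq_nil_or_concat (({L : Subgroup G | MinimalOver H K L}.toFinset).toList.map
      fun L => hat K - hat L) with hnil | ⟨l', a, hEq⟩
  · exact absurd hnil (eps_list_ne_nil (lt_of_le_of_ne hKH (Ne.symm hne)))
  · rw [List.concat_eq_append] at hEq
    have ha : a ∈ (({L : Subgroup G | MinimalOver H K L}.toFinset).toList.map
        fun L => hat K - hat L) := by
      rw [hEq]; exact List.mem_append_right _ (List.mem_singleton_self a)
    obtain ⟨L, hL, rfl⟩ := List.mem_map.mp ha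
    rw [Finset.mem_toList, Set.mem_toFinset] at hL
    have hfac : (hat K - hat L) * hat K = hat K - hat L := by
      rw [sub_mul, hat_mul_hat_of_le' (le_refl K), hat_mul_hat_of_le' hL.1.2.1.le]
    rw [hEq, List.prod_append, List.prod_cons, List.prod_nil, mul_one, mul_assoc, hfac]

lemma hatK_mul_eps {H K : Subgroup G} (hKH : K ≤ H) (hne : H ≠ K) :
    hat K * eps H K = eps H K := by
  rw [eps_eq hne]
  rcases List.exists_cons_of_ne_nil (eps_list_ne_nil (lt_of_le_of_ne hKH (Ne.symm hne)))
    with ⟨a, l', hEq⟩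
  have ha : a ∈ (({L : Subgroup G | MinimalOver H K L}.toFinset).toList.map
      fun L => hat K - hat L) := by
    rw [hEq]; exact List.mem_cons_self
  obtain ⟨L, hL, rfl⟩ := List.mem_map.mp ha
  rw [Finset.mem_toList, Set.mem_toFinset] at hL
  have hfac : hat K * (hat K - hat L) = hat K - hat L := by
    rw [mul_sub, hat_mul_hat_of_le (le_refl K), hat_mul_hat_of_le hL.1.2.1.le]
  rw [hEq, List.prod_cons, ← mul_assoc, hfac]

lemma hatM_mul_eps {H K M : Subgroup G} (hne : H ≠ K) (hM : NormalOver H K M) :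
    hat M * eps H K = 0 := by
  obtain ⟨L, hL, hLM⟩ := exists_minimalOver hM
  rw [eps_eq hne]
  have hmem : (hat K - hat L) ∈ (({L : Subgroup G | MinimalOver H K L}.toFinset).toList.map
      fun L => hat K - hat L) := by
    refine List.mem_map_of_mem ?_
    rw [Finset.mem_toList, Set.mem_toFinset]; exact hL
  have hperm := List.perm_cons_erase hmem
  rw [List.Perm.prod_eq' hperm (eps_list_pairwise H K), List.prod_cons, ← mul_assoc]
  have hz : hat M * (hat K - hat L) = 0 := by
    rw [mul_sub, hat_mul_hat_of_le' hM.2.1.le, hat_mul_hat_of_le' hLM, sub_self]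
  rw [hz, zero_mul]

lemma normalIn_sup {H A B : Subgroup G} (hBH : B ≤ H)
    (hA : NormalIn H A) (hB : NormalIn H B) : NormalIn H (A ⊔ B) := by
  intro h hh g hg
  obtain ⟨a, ha, b, hb, rfl⟩ := mem_sup_exists hBH hA g hg
  have hsplit : h⁻¹ * (a * b) * h = (h⁻¹ * a * h) * (h⁻¹ * b * h) := by group
  rw [hsplit]
  exact mul_mem (Subgroup.mem_sup_left (hA h hh a ha))
    (Subgroup.mem_sup_right (hB h hh b hb))

end StrongShodaAux

/-- A Shoda pair `(H,K)` of a finite group `G` with `H` normal in `G`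
is a strong Shoda pair of `G`. -/
theorem stmt5 {G : Type*} [Group G] [Fintype G] (H K : Subgroup G)
    (hSP : Paper.IsShodaPair H K) (hn : H.Normal) :
    Paper.IsStrongShodaPair H K := by
  obtain ⟨hKH, hNin, hCyc, hShoda⟩ := hSP
  refine ⟨⟨?_, ?_⟩, ⟨hCyc, ?_, ?_⟩, ?_⟩
  · -- H ≤ N_G(K)
    intro h hh
    rw [Subgroup.mem_normalizer_iff]
    intro n
    constructor
    · intro hn'
      have h1 := hNin h⁻¹ (inv_mem hh) n hn'
      have h2 : h⁻¹⁻¹ * n * h⁻¹ = h * n * h⁻¹ := by group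
      rwa [h2] at h1
    · intro hn'
      have h1 := hNin h hh _ hn'
      have h2 : h⁻¹ * (h * n * h⁻¹) * h = n := by group
      rwa [h2] at h1
  · -- H normal in N_G(K)
    intro g _ h hh
    have := hn.conj_mem h hh g⁻¹
    simpa using this
  · -- commutators of H lie in K
    obtain ⟨h₀, hh₀, hcyc⟩ := hCyc
    intro h₁ hh₁ h₂ hh₂
    obtain ⟨a, ha⟩ := hcyc h₁ hh₁
    obtain ⟨b, hb⟩ := hcyc h₂ hh₂
    have hx1 : h₀ ^ a ∈ H := zpow_mem hh₀ a
    have hx2 : h₀ ^ b ∈ H := zpow_mem hh₀ b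
    have hsub1 : h₁ = h₀ ^ a * ((h₀ ^ a)⁻¹ * h₁) := by group
    have hsub2 : h₂ = h₀ ^ b * ((h₀ ^ b)⁻¹ * h₂) := by group
    have key : h₁⁻¹ * h₂⁻¹ * h₁ * h₂ =
        ((h₀ ^ a)⁻¹ * h₁)⁻¹ *
          ((h₀ ^ a)⁻¹ * ((h₀ ^ b)⁻¹ * h₂)⁻¹ * (h₀ ^ a)) *
          ((h₀ ^ b)⁻¹ * ((h₀ ^ a)⁻¹ * h₁) * (h₀ ^ b)) *
          ((h₀ ^ b)⁻¹ * h₂) := by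
      group
    rw [key]
    exact mul_mem (mul_mem (mul_mem (inv_mem ha)
      (hNin _ hx1 _ (inv_mem hb))) (hNin _ hx2 _ ha)) hb
  · -- maximality
    intro C hKC hCnorm hab hHC
    refine le_antisymm ?_ hHC
    intro c hc
    apply hShoda
    refine le_trans inf_le_left ?_
    rw [Paper.commSub]
    apply (Subgroup.closure_le K).mpr
    rintro x ⟨h, hh, rfl⟩
    exact hab c hc h (hHC hh)
  · -- (SS3)
    intro g hg
    have hne : H ≠ K := by
      rintro rfl
      exact hg (by rw [Subgroup.normalizer_eq_top_iff.mpr hn]; trivial)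
    set K'' := K.map (MulAut.conj g).toMonoidHom with hK''def
    have hK''H : K'' ≤ H := by
      rintro x ⟨k, hk, rfl⟩
      exact hn.conj_mem k (hKH hk) g
    have hK''N : Paper.NormalIn H K'' := by
      rintro h hh x ⟨k, hk, rfl⟩
      have hh' : g⁻¹ * h * g ∈ H := by
        have := hn.conj_mem h hh g⁻¹
        simpa using this
      refine ⟨(g⁻¹ * h * g)⁻¹ * k * (g⁻¹ * h * g), hNin _ hh' k hk, ?_⟩
      show (MulAut.conj g) _ = h⁻¹ * ((MulAut.conj g).toMonoidHom k) * h
      simp only [MulAut.conj_apply, MulEquiv.coe_toMonoidHom]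
      group
    have hcard : Nat.card K'' = Nat.card K :=
      (Nat.card_congr (K.equivMapOfInjective _ (MulAut.conj g).injective).toEquiv).symm
    have hKK'' : ¬ K'' ≤ K := by
      intro hle
      have heq : K'' = K := Subgroup.eq_of_le_of_card_ge hle (le_of_eq hcard.symm)
      apply hg
      rw [Subgroup.mem_normalizer_iff]
      intro h
      constructor
      · intro hh
        have : g * h * g⁻¹ ∈ K'' := ⟨h, hh, rfl⟩
        rwa [heq] at this
      · intro hh
        rw [← heq] at hh
        obtain ⟨k, hk, hkeq⟩ := hh
        have : g * k * g⁻¹ = g * h * g⁻¹ := hkeq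
        have hk2 : k = h := mul_left_cancel (mul_right_cancel this)
        rwa [← hk2]
    have hMnorm : Paper.NormalOver H K (K'' ⊔ K) := by
      refine ⟨sup_le hK''H hKH, lt_of_le_of_ne le_sup_right ?_, ?_⟩
      · intro hKM
        exact hKK'' (hKM ▸ le_sup_left)
      · exact StrongShodaAux.normalIn_sup hKH hK''N hNin
    have e1 : Paper.eps H K * Paper.hat K = Paper.eps H K := StrongShodaAux.eps_mul_hatK hKH hne
    have e2 : Paper.hat K * Paper.eps H K = Paper.eps H K := StrongShodaAux.hatK_mul_eps hKH hne
    have e3 : Paper.hat K * MonoidAlgebra.of ℚ G g⁻¹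
        = MonoidAlgebra.of ℚ G g⁻¹ * Paper.hat K'' := by
      have hc := StrongShodaAux.conj_hat K g
      calc Paper.hat K * MonoidAlgebra.of ℚ G g⁻¹
          = MonoidAlgebra.of ℚ G g⁻¹ *
            (MonoidAlgebra.of ℚ G g * Paper.hat K * MonoidAlgebra.of ℚ G g⁻¹) := by
            rw [← mul_assoc, ← mul_assoc, ← map_mul, inv_mul_cancel, map_one, one_mul]
        _ = MonoidAlgebra.of ℚ G g⁻¹ * Paper.hat K'' := by rw [hc]
    have e4 : Paper.hat K'' * Paper.hat K = Paper.hat (K'' ⊔ K) :=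
      StrongShodaAux.hat_mul_hat_sup hK''H hKH hK''N
    have e5 : Paper.hat (K'' ⊔ K) * Paper.eps H K = 0 :=
      StrongShodaAux.hatM_mul_eps hne hMnorm
    have key : Paper.eps H K * (MonoidAlgebra.of ℚ G g⁻¹ * Paper.eps H K) = 0 := by
      calc Paper.eps H K * (MonoidAlgebra.of ℚ G g⁻¹ * Paper.eps H K)
          = Paper.eps H K * (MonoidAlgebra.of ℚ G g⁻¹ * (Paper.hat K * Paper.eps H K)) := by rw [e2]
        _ = (Paper.eps H K * Paper.hat K) *
            (MonoidAlgebra.of ℚ G g⁻¹ * (Paper.hat K * Paper.eps H K)) := by rw [e1]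
        _ = Paper.eps H K * ((Paper.hat K * MonoidAlgebra.of ℚ G g⁻¹) *
            (Paper.hat K * Paper.eps H K)) := by simp only [mul_assoc]
        _ = Paper.eps H K * ((MonoidAlgebra.of ℚ G g⁻¹ * Paper.hat K'') *
            (Paper.hat K * Paper.eps H K)) := by rw [e3]
        _ = Paper.eps H K * (MonoidAlgebra.of ℚ G g⁻¹ *
            ((Paper.hat K'' * Paper.hat K) * Paper.eps H K)) := by simp only [mul_assoc]
        _ = Paper.eps H K * (MonoidAlgebra.of ℚ G g⁻¹ *
            (Paper.hat (K'' ⊔ K) * Paper.eps H K)) := by rw [e4]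
        _ = Paper.eps H K * (MonoidAlgebra.of ℚ G g⁻¹ * 0) := by rw [e5]
        _ = 0 := by rw [mul_zero, mul_zero]
    calc Paper.eps H K * (MonoidAlgebra.of ℚ G g⁻¹ * Paper.eps H K * MonoidAlgebra.of ℚ G g)
        = (Paper.eps H K * (MonoidAlgebra.of ℚ G g⁻¹ * Paper.eps H K)) * MonoidAlgebra.of ℚ G g := by
          simp only [mul_assoc]
      _ = 0 := by rw [key, zero_mul]
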